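/- There is a universal constant C > 0 with the following property. Let n ≥ 1 and let p, p' ∈ [0,1]^n satisfy Σ_{i=1}^n |p_i − p'_i| ≤ 2. Let μ = ⊗_{i=1}^n Ber(p_i) and μ' = ⊗_{i=1}^n Ber(p'_i) be the corresponding product Bernoulli probability measures on {0,1}^n. Then for every ζ ∈ (0,1) there exists a probability measure Γ on {0,1}^n × {0,1}^n whose first marginal is μ and whose second marginal is μ', such that Γ({(x,y) : Σ_{i=1}^n |x_i − y_i| > C·log(2/ζ)}) ≤ ζ. -/

import Mathlib

open MeasureTheory
open scoped BigOperators ENNReal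

/-- The Bernoulli probability measure on `Bool` with success probability `q`. -/
noncomputable def bern (q : ℝ) : Measure Bool :=
  ENNReal.ofReal (1 - q) • Measure.dirac false + ENNReal.ofReal q • Measure.dirac true

lemma bern_prob {q : ℝ} (hq : q ∈ Set.Icc (0:ℝ) 1) : IsProbabilityMeasure (bern q) := by
  constructor
  simp only [bern, Measure.coe_add, Measure.coe_smul, Pi.add_apply, Pi.smul_apply,
    Measure.dirac_apply_of_mem (Set.mem_univ _), smul_eq_mul, mul_one]
  rw [← ENNReal.ofReal_add (by linarith [hq.2]) hq.1]
  norm_num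

/-- The optimal coupling of `bern q` and `bern q'`. -/
noncomputable def cpl (q q' : ℝ) : Measure (Bool × Bool) :=
  ENNReal.ofReal (min (1 - q) (1 - q')) • Measure.dirac (false, false)
  + ENNReal.ofReal (min q q') • Measure.dirac (true, true)
  + ENNReal.ofReal (q - q') • Measure.dirac (true, false)
  + ENNReal.ofReal (q' - q) • Measure.dirac (false, true)

lemma cpl_fst {q q' : ℝ} (hq : q ∈ Set.Icc (0:ℝ) 1) (hq' : q' ∈ Set.Icc (0:ℝ) 1) :
    (cpl q q').map Prod.fst = bern q := by
  obtain ⟨hq0, hq1⟩ := hq; obtain ⟨hq'0, hq'1⟩ := hq'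
  rw [cpl, Measure.map_add _ _ Measurable.of_discrete,
    Measure.map_add _ _ Measurable.of_discrete, Measure.map_add _ _ Measurable.of_discrete]
  simp only [Measure.map_smul, Measure.map_dirac' Measurable.of_discrete]
  rcases le_total q q' with h | h
  · rw [min_eq_right (by linarith), min_eq_left h,
      ENNReal.ofReal_eq_zero.2 (show q - q' ≤ (0:ℝ) by linarith), bern]
    have : ENNReal.ofReal (1 - q) = ENNReal.ofReal (1 - q') + ENNReal.ofReal (q' - q) := by
      rw [← ENNReal.ofReal_add (by linarith) (by linarith)]; congr 1; ring
    rw [this, add_smul, zero_smul]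
    abel
  · rw [min_eq_left (by linarith), min_eq_right h,
      ENNReal.ofReal_eq_zero.2 (show q' - q ≤ (0:ℝ) by linarith), bern]
    have : ENNReal.ofReal q = ENNReal.ofReal q' + ENNReal.ofReal (q - q') := by
      rw [← ENNReal.ofReal_add (by linarith) (by linarith)]; congr 1; ring
    rw [this, add_smul, zero_smul]
    abel

lemma cpl_snd {q q' : ℝ} (hq : q ∈ Set.Icc (0:ℝ) 1) (hq' : q' ∈ Set.Icc (0:ℝ) 1) :
    (cpl q q').map Prod.snd = bern q' := by
  obtain ⟨hq0, hq1⟩ := hq; obtain ⟨hq'0, hq'1⟩ := hq'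
  rw [cpl, Measure.map_add _ _ Measurable.of_discrete,
    Measure.map_add _ _ Measurable.of_discrete, Measure.map_add _ _ Measurable.of_discrete]
  simp only [Measure.map_smul, Measure.map_dirac' Measurable.of_discrete]
  rcases le_total q q' with h | h
  · rw [min_eq_right (by linarith), min_eq_left h,
      ENNReal.ofReal_eq_zero.2 (show q - q' ≤ (0:ℝ) by linarith), bern]
    have : ENNReal.ofReal q' = ENNReal.ofReal q + ENNReal.ofReal (q' - q) := by
      rw [← ENNReal.ofReal_add (by linarith) (by linarith)]; congr 1; ring
    rw [this, add_smul, zero_smul]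
    abel
  · rw [min_eq_left (by linarith), min_eq_right h,
      ENNReal.ofReal_eq_zero.2 (show q' - q ≤ (0:ℝ) by linarith), bern]
    have : ENNReal.ofReal (1 - q') = ENNReal.ofReal (1 - q) + ENNReal.ofReal (q - q') := by
      rw [← ENNReal.ofReal_add (by linarith) (by linarith)]; congr 1; ring
    rw [this, add_smul, zero_smul]
    abel

lemma cpl_prob {q q' : ℝ} (hq : q ∈ Set.Icc (0:ℝ) 1) (hq' : q' ∈ Set.Icc (0:ℝ) 1) :
    IsProbabilityMeasure (cpl q q') := by
  constructor
  have : cpl q q' Set.univ = ((cpl q q').map Prod.fst) Set.univ := by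
    rw [Measure.map_apply Measurable.of_discrete MeasurableSet.univ, Set.preimage_univ]
  rw [this, cpl_fst hq hq']
  exact (bern_prob hq).measure_univ

/-- The per-coordinate exponential moment bound. -/
lemma cpl_mgf {q q' : ℝ} (hq : q ∈ Set.Icc (0:ℝ) 1) (hq' : q' ∈ Set.Icc (0:ℝ) 1) :
    ∫⁻ ab, ENNReal.ofReal (Real.exp (if ab.1 = ab.2 then (0:ℝ) else 1)) ∂(cpl q q')
      ≤ ENNReal.ofReal (Real.exp ((Real.exp 1 - 1) * |q - q'|)) := by
  obtain ⟨hq0, hq1⟩ := hq; obtain ⟨hq'0, hq'1⟩ := hq'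
  have he1 : (1:ℝ) ≤ Real.exp 1 := by linarith [Real.add_one_le_exp (1:ℝ)]
  rw [cpl, lintegral_add_measure, lintegral_add_measure, lintegral_add_measure]
  simp only [lintegral_smul_measure, lintegral_dirac]
  norm_num [Real.exp_zero, -ENNReal.ofReal_min]
  rcases le_total q q' with h | h
  · rw [min_eq_right (by linarith : (1:ℝ) - q' ≤ 1 - q), min_eq_left h,
      ENNReal.ofReal_eq_zero.2 (by linarith : q - q' ≤ 0),
      abs_sub_comm, abs_of_nonneg (by linarith : (0:ℝ) ≤ q' - q)]
    rw [zero_mul, add_zero, ← ENNReal.ofReal_add (by linarith) (by linarith),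
      ← ENNReal.ofReal_mul (by linarith : (0:ℝ) ≤ q' - q),
      ← ENNReal.ofReal_add (by linarith) (by nlinarith [Real.exp_pos 1])]
    apply ENNReal.ofReal_le_ofReal
    have := Real.add_one_le_exp ((Real.exp 1 - 1) * (q' - q))
    nlinarith
  · rw [min_eq_left (by linarith : (1:ℝ) - q ≤ 1 - q'), min_eq_right h,
      ENNReal.ofReal_eq_zero.2 (by linarith : q' - q ≤ 0),
      abs_of_nonneg (by linarith : (0:ℝ) ≤ q - q')]
    rw [zero_mul, add_zero, ← ENNReal.ofReal_add (by linarith) (by linarith),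
      ← ENNReal.ofReal_mul (by linarith : (0:ℝ) ≤ q - q'),
      ← ENNReal.ofReal_add (by linarith) (by nlinarith [Real.exp_pos 1])]
    apply ENNReal.ofReal_le_ofReal
    have := Real.add_one_le_exp ((Real.exp 1 - 1) * (q - q'))
    nlinarith

lemma lintegral_pi_prod {n : ℕ} {α : Type*} [Fintype α] [MeasurableSpace α]
    [MeasurableSingletonClass α] (μ : Fin n → Measure α) [∀ i, SigmaFinite (μ i)] (g : Fin n → α → ℝ≥0∞) :
    ∫⁻ ω, ∏ i, g i (ω i) ∂Measure.pi μ = ∏ i, ∫⁻ a, g i a ∂(μ i) := by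
  rw [lintegral_fintype]
  simp_rw [lintegral_fintype]
  rw [Fintype.prod_sum]
  apply Finset.sum_congr rfl
  intro ω _
  have hs : ({ω} : Set (Fin n → α)) = Set.pi Set.univ (fun i => {ω i}) := by
    ext x; simp [funext_iff, Set.mem_pi]
  rw [hs, Measure.pi_pi, Finset.prod_mul_distrib]

theorem stmt1 : ∃ C : ℝ, 0 < C ∧
    ∀ (n : ℕ), 1 ≤ n → ∀ p p' : Fin n → ℝ,
    (∀ i, p i ∈ Set.Icc (0 : ℝ) 1) → (∀ i, p' i ∈ Set.Icc (0 : ℝ) 1) →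
    (∑ i : Fin n, |p i - p' i|) ≤ 2 →
    ∀ ζ : ℝ, ζ ∈ Set.Ioo (0 : ℝ) 1 →
    ∃ Γ : Measure ((Fin n → Bool) × (Fin n → Bool)), IsProbabilityMeasure Γ ∧
      Γ.map Prod.fst = Measure.pi (fun i => bern (p i)) ∧
      Γ.map Prod.snd = Measure.pi (fun i => bern (p' i)) ∧
      Γ {xy | (∑ i : Fin n, (if xy.1 i = xy.2 i then (0 : ℝ) else 1)) > C * Real.log (2 / ζ)}
        ≤ ENNReal.ofReal ζ := by
  refine ⟨10, by norm_num, ?_⟩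
  intro n _ p p' hp hp' hsum ζ hζ
  obtain ⟨hζ0, hζ1⟩ := hζ
  set γ : Fin n → Measure (Bool × Bool) := fun i => cpl (p i) (p' i) with hγ
  haveI hprob : ∀ i, IsProbabilityMeasure (γ i) := fun i => cpl_prob (hp i) (hp' i)
  haveI : ∀ i, IsProbabilityMeasure (bern (p i)) := fun i => bern_prob (hp i)
  haveI : ∀ i, IsProbabilityMeasure (bern (p' i)) := fun i => bern_prob (hp' i)
  set E : (Fin n → Bool × Bool) → (Fin n → Bool) × (Fin n → Bool) :=
    fun ω => (fun i => (ω i).1, fun i => (ω i).2) with hE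
  refine ⟨(Measure.pi γ).map E, ?_, ?_, ?_, ?_⟩
  · exact Measure.isProbabilityMeasure_map Measurable.of_discrete.aemeasurable
  · rw [Measure.map_map Measurable.of_discrete Measurable.of_discrete]
    refine (Measure.pi_eq fun s _ => ?_).symm
    rw [Measure.map_apply Measurable.of_discrete MeasurableSet.of_discrete]
    have : (Prod.fst ∘ E) ⁻¹' Set.pi Set.univ s
        = Set.pi Set.univ (fun i => Prod.fst ⁻¹' s i) := by
      ext ω; simp [hE, Set.mem_pi]
    rw [this, Measure.pi_pi]
    exact Finset.prod_congr rfl fun i _ => by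
      rw [← Measure.map_apply Measurable.of_discrete MeasurableSet.of_discrete,
        hγ, cpl_fst (hp i) (hp' i)]
  · rw [Measure.map_map Measurable.of_discrete Measurable.of_discrete]
    refine (Measure.pi_eq fun s _ => ?_).symm
    rw [Measure.map_apply Measurable.of_discrete MeasurableSet.of_discrete]
    have : (Prod.snd ∘ E) ⁻¹' Set.pi Set.univ s
        = Set.pi Set.univ (fun i => Prod.snd ⁻¹' s i) := by
      ext ω; simp [hE, Set.mem_pi]
    rw [this, Measure.pi_pi]
    exact Finset.prod_congr rfl fun i _ => by
      rw [← Measure.map_apply Measurable.of_discrete MeasurableSet.of_discrete,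
        hγ, cpl_snd (hp i) (hp' i)]
  · set t : ℝ := 10 * Real.log (2 / ζ) with ht
    rw [Measure.map_apply Measurable.of_discrete MeasurableSet.of_discrete]
    set F : (Fin n → Bool × Bool) → ℝ≥0∞ :=
      fun ω => ∏ i, ENNReal.ofReal (Real.exp (if (ω i).1 = (ω i).2 then (0:ℝ) else 1)) with hF
    have hFeq : ∀ ω, F ω
        = ENNReal.ofReal (Real.exp (∑ i, (if (ω i).1 = (ω i).2 then (0:ℝ) else 1))) := by
      intro ω
      rw [hF, Real.exp_sum, ENNReal.ofReal_prod_of_nonneg (fun i _ => (Real.exp_pos _).le)]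
    have hsub : E ⁻¹' {xy : (Fin n → Bool) × (Fin n → Bool) |
          (∑ i : Fin n, (if xy.1 i = xy.2 i then (0:ℝ) else 1)) > 10 * Real.log (2 / ζ)}
        ⊆ {ω | ENNReal.ofReal (Real.exp t) ≤ F ω} := by
      intro ω hω
      simp only [Set.mem_preimage, Set.mem_setOf_eq, hE] at hω
      rw [Set.mem_setOf_eq, hFeq]
      exact ENNReal.ofReal_le_ofReal (Real.exp_le_exp.2 (le_of_lt hω))
    refine le_trans (measure_mono hsub) ?_
    refine le_trans (meas_ge_le_lintegral_div Measurable.of_discrete.aemeasurable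
      (by positivity) ENNReal.ofReal_ne_top) ?_
    have hint : ∫⁻ ω, F ω ∂Measure.pi γ
        ≤ ENNReal.ofReal (Real.exp (2 * (Real.exp 1 - 1))) := by
      have h0 : ∫⁻ ω, F ω ∂Measure.pi γ
          = ∏ i, ∫⁻ ab, ENNReal.ofReal (Real.exp (if ab.1 = ab.2 then (0:ℝ) else 1)) ∂(γ i) :=
        by simp only [hF]; exact lintegral_pi_prod γ (fun _ ab => ENNReal.ofReal (Real.exp (if ab.1 = ab.2 then (0:ℝ) else 1)))
      rw [h0]
      calc ∏ i, ∫⁻ ab, ENNReal.ofReal (Real.exp (if ab.1 = ab.2 then (0:ℝ) else 1)) ∂(γ i)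
          ≤ ∏ i, ENNReal.ofReal (Real.exp ((Real.exp 1 - 1) * |p i - p' i|)) :=
            Finset.prod_le_prod' fun i _ => cpl_mgf (hp i) (hp' i)
        _ = ENNReal.ofReal (Real.exp ((Real.exp 1 - 1) * ∑ i, |p i - p' i|)) := by
            rw [← ENNReal.ofReal_prod_of_nonneg (fun i _ => (Real.exp_pos _).le),
              ← Real.exp_sum, Finset.mul_sum]
        _ ≤ _ := by
            apply ENNReal.ofReal_le_ofReal
            apply Real.exp_le_exp.2
            have he1 : (1:ℝ) ≤ Real.exp 1 := by linarith [Real.add_one_le_exp (1:ℝ)]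
            nlinarith
    refine le_trans (ENNReal.div_le_div_right hint _) ?_
    rw [← ENNReal.ofReal_div_of_pos (Real.exp_pos _), ← Real.exp_sub]
    apply ENNReal.ofReal_le_ofReal
    rw [← Real.exp_log hζ0]
    apply Real.exp_le_exp.2
    rw [ht, Real.log_div (by norm_num) (ne_of_gt hζ0)]
    have hlog2 : (0.6931471803 : ℝ) < Real.log 2 := Real.log_two_gt_d9
    have hexp1 : Real.exp 1 < 2.7182818286 := Real.exp_one_lt_d9
    have hlogζ : Real.log ζ ≤ 0 := Real.log_nonpos hζ0.le hζ1.le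
    nlinarith
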